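/- Let (n, ⟨·,·⟩, φ) be of modified H-type and let T : z → z be the unique linear map with ⟨T z, z'⟩ = B_φ(z, z') for all z, z' ∈ z. Then for every z ∈ z and every x ∈ v: [x, j(z)x] = ⟨x, x⟩·T z. -/

import Mathlib

theorem modified_H_type_bracket_x_jzx
    {n : Type*} [LieRing n] [LieAlgebra ℝ n] [FiniteDimensional ℝ n]
    (B : LinearMap.BilinForm ℝ n)
    (hBsymm : ∀ a b : n, B a b = B b a)
    (hBnd : B.Nondegenerate)
    (Z : Submodule ℝ n)
    (hZ : Z = LieSubmodule.toSubmodule (LieAlgebra.center ℝ n))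
    (h2step : ∀ a b : n, ⁅a, b⁆ ∈ Z)
    (V : Submodule ℝ n)
    (hV : V = B.orthogonal Z)
    (hZnd : (B.restrict Z).Nondegenerate)
    (hVnd : (B.restrict V).Nondegenerate)
    (j : Z →ₗ[ℝ] V →ₗ[ℝ] V)
    (hj : ∀ (z : Z) (x y : V), B ⁅(x : n), (y : n)⁆ (z : n) = B (y : n) ((j z x : V) : n))
    (φ : QuadraticForm ℝ Z)
    (hH : ∀ z : Z, (j z) ∘ₗ (j z) = (-(φ z)) • (LinearMap.id : V →ₗ[ℝ] V))
    (T : Z →ₗ[ℝ] Z)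
    (hT : ∀ a b : Z, B ((T a : Z) : n) ((b : Z) : n) = (φ (a + b) - φ a - φ b) / 2) :
    ∀ (z : Z) (x : V),
      ⁅(x : n), ((j z x : V) : n)⁆ = B (x : n) (x : n) • ((T z : Z) : n) := by
  intro z x
  -- skew-adjointness of each j w
  have skew : ∀ (w : Z) (a b : V),
      B ((j w a : V) : n) ((b : V) : n) = - B (a : n) ((j w b : V) : n) := by
    intro w a b
    have h1 := hj w a b
    have h2 := hj w b a
    have hlie : ⁅(b : n), (a : n)⁆ = -⁅(a : n), (b : n)⁆ := by rw [← lie_skew]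
    rw [hlie, map_neg, LinearMap.neg_apply] at h2
    calc B ((j w a : V) : n) ((b : V) : n) = B (b : n) ((j w a : V) : n) := hBsymm _ _
      _ = B ⁅(a : n), (b : n)⁆ (w : n) := h1.symm
      _ = - B ((a : V) : n) ((j w b : V) : n) := by linarith [h2]
  -- anticommutation relation applied to x
  have hanti : ∀ w : Z, j z (j w x) + j w (j z x)
      = (-(φ (z + w))) • x + (φ z) • x + (φ w) • x := by
    intro w
    have h := congrArg (fun L : V →ₗ[ℝ] V => L x) (hH (z + w))
    have hz := congrArg (fun L : V →ₗ[ℝ] V => L x) (hH z)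
    have hw := congrArg (fun L : V →ₗ[ℝ] V => L x) (hH w)
    simp only [LinearMap.comp_apply, map_add, LinearMap.add_apply, LinearMap.smul_apply,
      LinearMap.id_apply] at h hz hw
    linear_combination (norm := module) h - hz - hw
  -- key scalar identity
  have key : ∀ w : Z, B ⁅(x : n), ((j z x : V) : n)⁆ ((w : Z) : n)
      = B (x : n) (x : n) * B ((T z : Z) : n) ((w : Z) : n) := by
    intro w
    have e1 : B ⁅(x : n), ((j z x : V) : n)⁆ (w : n)
        = B ((j z x : V) : n) ((j w x : V) : n) := hj w x (j z x)
    have e2 := skew z x (j w x)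
    have e3 := skew w (j z x) x
    have e3' : B ((x : V) : n) ((j w (j z x) : V) : n) = - B ((j z x : V) : n) ((j w x : V) : n) := by
      rw [hBsymm]; linarith [e3]
    have e4 : B (x : n) (((j z (j w x) : V) : n) + ((j w (j z x) : V) : n))
        = - 2 * B ((j z x : V) : n) ((j w x : V) : n) := by
      rw [map_add]; linarith [e2, e3']
    have e5 : ((j z (j w x) : V) : n) + ((j w (j z x) : V) : n)
        = (-(φ (z + w))) • (x : n) + (φ z) • (x : n) + (φ w) • (x : n) := by
      have := congrArg (Submodule.subtype V) (hanti w)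
      simpa using this
    rw [e5] at e4
    simp only [map_add, map_smul, smul_eq_mul] at e4
    have e6 := hT z w
    rw [e1]
    linear_combination (1/2) * e4 - (B (x : n) (x : n)) * e6
  -- conclude via nondegeneracy on Z
  have hmem : ⁅(x : n), ((j z x : V) : n)⁆ ∈ Z := h2step _ _
  set u : Z := ⟨⁅(x : n), ((j z x : V) : n)⁆, hmem⟩ with hu
  have hd : u - B (x : n) (x : n) • T z = 0 := by
    apply hZnd.1
    intro w
    have hcoe : ((u - B (x : n) (x : n) • T z : Z) : n)
        = ⁅(x : n), ((j z x : V) : n)⁆ - B (x : n) (x : n) • ((T z : Z) : n) := by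
      simp [hu]
    have hrw : (B.restrict Z) (u - B (x : n) (x : n) • T z) w
        = B ((u - B (x : n) (x : n) • T z : Z) : n) ((w : Z) : n) := rfl
    rw [hrw, hcoe, map_sub, LinearMap.sub_apply, map_smul, LinearMap.smul_apply, smul_eq_mul, key w]
    ring
  have : u = B (x : n) (x : n) • T z := by
    have := sub_eq_zero.mp hd; exact this
  have := congrArg (Submodule.subtype Z) this
  simpa [hu] using this
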